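/- Let (X,d,≤,≪,τ) be a Lorentzian pre-length space and A ⊆ X open. Let V'^N be the timelike Hausdorff measure of the restricted Lorentzian pre-length space (A, d|_A, ≤|_A, ≪|_A, τ|_A). Then V'^N(A) ≤ V^N(A). -/

import Mathlib

open Set MeasureTheory
open scoped ENNReal NNReal

noncomputable section

/-- A Lorentzian pre-length space structure on a metric space `X`. -/
structure LPLS (X : Type*) [MetricSpace X] : Type _ where
  causal : X → X → Prop
  chron : X → X → Prop
  tau : X → X → ℝ≥0∞
  causal_refl : ∀ x, causal x x
  causal_trans : ∀ x y z, causal x y → causal y z → causal x z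
  chron_trans : ∀ x y z, chron x y → chron y z → chron x z
  chron_causal : ∀ x y, chron x y → causal x y
  tau_lsc : LowerSemicontinuous fun p : X × X => tau p.1 p.2
  tau_rev_triangle : ∀ x y z, causal x y → causal y z → tau x y + tau y z ≤ tau x z
  tau_eq_zero : ∀ x y, ¬ causal x y → tau x y = 0
  tau_pos_iff : ∀ x y, 0 < tau x y ↔ chron x y

variable {Y : Type*}

/-- The causal diamond `J(a,b)`. -/
def cdiam (causal : Y → Y → Prop) (a b : Y) : Set Y := {z | causal a z ∧ causal z b}

/-- The set associated to a possibly-empty element of `𝒥`. -/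
def optDiamond (causal : Y → Y → Prop) : Option (Y × Y) → Set Y
  | none => ∅
  | some ab => cdiam causal ab.1 ab.2

/-- The weight `ρ_N`. -/
def optWeight (tau : Y → Y → ℝ≥0∞) (ω N : ℝ) : Option (Y × Y) → ℝ≥0∞
  | none => 0
  | some ab => ENNReal.ofReal ω * tau ab.1 ab.2 ^ N

/-- Diameter with respect to a (pseudo-)edistance `e`. -/
def ediamWith (e : Y → Y → ℝ≥0∞) (S : Set Y) : ℝ≥0∞ := ⨆ p ∈ S, ⨆ q ∈ S, e p q

/-- `V^N_δ`. -/
def Vdelta (e : Y → Y → ℝ≥0∞) (causal : Y → Y → Prop) (tau : Y → Y → ℝ≥0∞)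
    (ω N : ℝ) (δ : ℝ≥0∞) (A : Set Y) : ℝ≥0∞ :=
  ⨅ (c : ℕ → Option (Y × Y)) (_ : ∀ i, ∀ ab ∈ c i, causal ab.1 ab.2)
    (_ : ∀ i, ediamWith e (optDiamond causal (c i)) < δ)
    (_ : A ⊆ ⋃ i, optDiamond causal (c i)),
    ∑' i, optWeight tau ω N (c i)

/-- `V^N`. -/
def Vmeas (e : Y → Y → ℝ≥0∞) (causal : Y → Y → Prop) (tau : Y → Y → ℝ≥0∞)
    (ω N : ℝ) (A : Set Y) : ℝ≥0∞ :=
  ⨆ (δ : ℝ≥0∞) (_ : 0 < δ), Vdelta e causal tau ω N δ A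

/-- `W^N_δ`. -/
def Wdelta (e : Y → Y → ℝ≥0∞) (causal : Y → Y → Prop) (tau : Y → Y → ℝ≥0∞)
    (ω N : ℝ) (δ : ℝ≥0∞) (A : Set Y) : ℝ≥0∞ :=
  ⨅ (c : ℕ → Option (Y × Y)) (_ : ∀ i, ∀ ab ∈ c i, causal ab.1 ab.2)
    (_ : ∀ i, ∀ ab ∈ c i, e ab.1 ab.2 < δ)
    (_ : A ⊆ ⋃ i, optDiamond causal (c i)),
    ∑' i, optWeight tau ω N (c i)

/-- `W^N`. -/
def Wmeas (e : Y → Y → ℝ≥0∞) (causal : Y → Y → Prop) (tau : Y → Y → ℝ≥0∞)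
    (ω N : ℝ) (A : Set Y) : ℝ≥0∞ :=
  ⨆ (δ : ℝ≥0∞) (_ : 0 < δ), Wdelta e causal tau ω N δ A

/-- The restriction of a Lorentzian pre-length structure to a subset `A ⊆ X`. -/
def LPLS.restrict {X : Type*} [MetricSpace X] (L : LPLS X) (A : Set X) : LPLS A where
  causal a b := L.causal a b
  chron a b := L.chron a b
  tau a b := L.tau a b
  causal_refl x := L.causal_refl x
  causal_trans x y z := L.causal_trans x y z
  chron_trans x y z := L.chron_trans x y z
  chron_causal x y := L.chron_causal x y
  tau_lsc := by
    intro p y hy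
    have hc : Continuous fun q : A × A => (((q.1 : X), (q.2 : X)) : X × X) := by continuity
    exact (hc.continuousAt (x := p)).eventually (L.tau_lsc ((p.1 : X), (p.2 : X)) y hy)
  tau_rev_triangle x y z hxy hyz := L.tau_rev_triangle x y z hxy hyz
  tau_eq_zero x y h := L.tau_eq_zero x y h
  tau_pos_iff x y := L.tau_pos_iff x y

/-- The set function on subsets of `A` assigning to a causal diamond of `A` its weight. -/
def mAux {X : Type*} [MetricSpace X] (L : LPLS X) (A : Set X) (ω N : ℝ) : Set A → ℝ≥0∞ :=
  fun s => ⨅ (ab : A × A) (_ : L.causal ab.1 ab.2)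
    (_ : s = cdiam (L.restrict A).causal ab.1 ab.2),
    ENNReal.ofReal ω * L.tau ab.1 ab.2 ^ N

lemma ediamWith_edist_eq {Z : Type*} [PseudoEMetricSpace Z] (S : Set Z) :
    ediamWith (fun a b : Z => edist a b) S = EMetric.diam S := rfl

lemma mAux_le {X : Type*} [MetricSpace X] {L : LPLS X} {A : Set X} {ω N : ℝ}
    {s : Set A} {a b : A} (h1 : L.causal a b)
    (h2 : s = cdiam (L.restrict A).causal a b) :
    mAux L A ω N s ≤ ENNReal.ofReal ω * L.tau a b ^ N :=
  iInf_le_of_le (a, b) <| iInf_le_of_le h1 <| iInf_le _ h2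

lemma mAux_lt {X : Type*} [MetricSpace X] {L : LPLS X} {A : Set X} {ω N : ℝ}
    {s : Set A} {cst : ℝ≥0∞} (h : mAux L A ω N s < cst) :
    ∃ ab : A × A, L.causal ab.1 ab.2 ∧ s = cdiam (L.restrict A).causal ab.1 ab.2 ∧
      ENNReal.ofReal ω * L.tau ab.1 ab.2 ^ N < cst := by
  by_contra hcon
  push_neg at hcon
  refine absurd h (not_lt.2 ?_)
  simp only [mAux]
  exact le_iInf fun ab => le_iInf fun h1 => le_iInf fun h2 => hcon ab h1 h2

/-- For an open subset `A ⊆ X`, the timelike Hausdorff measure `V'^N` of the restricted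
Lorentzian pre-length space `(A, d|_A, ≤|_A, ≪|_A, τ|_A)` satisfies `V'^N(A) ≤ V^N(A)`. -/
theorem stmt10 {X : Type*} [MetricSpace X] (L : LPLS X) (A : Set X) (hA : IsOpen A)
    (ω N : ℝ) (hω : 0 < ω) (hN : 0 ≤ N) :
    Vmeas (fun a b : A => edist a b) (L.restrict A).causal (L.restrict A).tau ω N
        (Set.univ : Set A) ≤
      Vmeas (fun a b : X => edist a b) L.causal L.tau ω N A := by
  classical
  borelize ↥A
  set μ : OuterMeasure ↥A := OuterMeasure.mkMetric' (mAux L A ω N) with hμdef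
  set D : ℕ → Set ↥A := fun n =>
    {a : ↥A | ((n + 1 : ℕ) : ℝ≥0∞)⁻¹ ≤ EMetric.infEdist (a : X) Aᶜ} with hD
  -- basic properties of `D`
  have hDmono : Monotone D := by
    intro i j hij a ha
    simp only [hD, mem_setOf_eq] at ha ⊢
    exact le_trans (ENNReal.inv_le_inv.2 (by exact_mod_cast Nat.succ_le_succ hij)) ha
  have hDclosed : ∀ n, IsClosed (D n) :=
    fun n => isClosed_le continuous_const (EMetric.continuous_infEdist.comp continuous_subtype_val)
  have hDunion : (⋃ n, D n) = (univ : Set ↥A) := by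
    ext a
    simp only [mem_iUnion, mem_univ, iff_true, hD, mem_setOf_eq]
    have hpos : 0 < EMetric.infEdist (a : X) Aᶜ := by
      refine EMetric.infEdist_pos_iff_notMem_closure.2 ?_
      rw [hA.isClosed_compl.closure_eq]
      exact fun h => h a.2
    obtain ⟨k, hk⟩ := ENNReal.exists_inv_nat_lt hpos.ne'
    exact ⟨k, le_trans (ENNReal.inv_le_inv.2 (by exact_mod_cast Nat.le_succ k)) hk.le⟩
  -- Part B : `V'(univ) ≤ μ univ`
  have hB : Vmeas (fun a b : ↥A => edist a b) (L.restrict A).causal (L.restrict A).tau ω N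
      (univ : Set ↥A) ≤ μ univ := by
    rw [Vmeas]
    refine iSup₂_le fun δ hδ => ?_
    obtain ⟨r, hr0, hrδ⟩ := exists_between hδ
    have happly : μ univ
        = ⨆ (r' : ℝ≥0∞) (_ : 0 < r'), OuterMeasure.mkMetric'.pre (mAux L A ω N) r' univ := by
      simp only [hμdef, OuterMeasure.mkMetric', OuterMeasure.iSup_apply]
    rw [happly]
    refine le_trans ?_ (le_iSup₂ (f := fun r' (_ : (0 : ℝ≥0∞) < r') =>
      OuterMeasure.mkMetric'.pre (mAux L A ω N) r' univ) r hr0)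
    rw [OuterMeasure.mkMetric'.pre, OuterMeasure.boundedBy_apply]
    refine le_iInf₂ fun t ht => ?_
    set F : ℕ → ℝ≥0∞ := fun n => ⨆ _ : (t n).Nonempty,
      MeasureTheory.extend (fun s (_ : EMetric.diam s ≤ r) => mAux L A ω N s) (t n) with hF
    rcases eq_or_ne (∑' n, F n) ∞ with htop | htop
    · show _ ≤ ∑' n, F n
      rw [htop]; exact le_top
    refine ENNReal.le_of_forall_pos_le_add fun ε hε _ => ?_
    obtain ⟨e, he0, hesum⟩ :=
      ENNReal.exists_pos_sum_of_countable' (ENNReal.coe_pos.2 hε).ne' ℕ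
    have key : ∀ n, ∃ o : Option (↥A × ↥A),
        (∀ ab ∈ o, (L.restrict A).causal ab.1 ab.2) ∧
        ediamWith (fun a b : ↥A => edist a b) (optDiamond (L.restrict A).causal o) < δ ∧
        t n ⊆ optDiamond (L.restrict A).causal o ∧
        optWeight (L.restrict A).tau ω N o ≤ F n + e n := by
      intro n
      rcases eq_empty_or_nonempty (t n) with hemp | hne
      · refine ⟨none, by simp, ?_, by simp [hemp, optDiamond], by simp [optWeight]⟩
        simpa [optDiamond, ediamWith] using hδ
      · have hFn : F n
            = MeasureTheory.extend (fun s (_ : EMetric.diam s ≤ r) => mAux L A ω N s) (t n) := by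
          rw [hF]; exact iSup_pos hne
        have hFfin : F n ≠ ∞ := ENNReal.ne_top_of_tsum_ne_top htop n
        have hdiam : EMetric.diam (t n) ≤ r := by
          by_contra h
          exact hFfin (hFn.trans (MeasureTheory.extend_eq_top _ h))
        have hmval : MeasureTheory.extend
            (fun s (_ : EMetric.diam s ≤ r) => mAux L A ω N s) (t n) = mAux L A ω N (t n) :=
          MeasureTheory.extend_eq (fun s (_ : EMetric.diam s ≤ r) => mAux L A ω N s) hdiam
        have hmfin : mAux L A ω N (t n) ≠ ∞ := by rw [← hmval, ← hFn]; exact hFfin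
        have hlt : mAux L A ω N (t n) < mAux L A ω N (t n) + e n :=
          ENNReal.lt_add_right hmfin (he0 n).ne'
        obtain ⟨ab, hcab, hteq, hwlt⟩ := mAux_lt hlt
        refine ⟨some ab, ?_, ?_, ?_, ?_⟩
        · intro ab' hab'
          simp only [Option.mem_def, Option.some.injEq] at hab'
          subst hab'
          exact hcab
        · show ediamWith (fun a b : ↥A => edist a b)
            (cdiam (L.restrict A).causal ab.1 ab.2) < δ
          rw [← hteq, ediamWith_edist_eq]
          exact lt_of_le_of_lt hdiam hrδ
        · show t n ⊆ cdiam (L.restrict A).causal ab.1 ab.2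
          rw [← hteq]
        · show ENNReal.ofReal ω * (L.restrict A).tau ab.1 ab.2 ^ N ≤ F n + e n
          rw [hFn, hmval]
          exact hwlt.le
    choose c hc1 hc2 hc3 hc4 using key
    have hcover : (univ : Set ↥A) ⊆ ⋃ i, optDiamond (L.restrict A).causal (c i) := by
      intro x hx
      rcases mem_iUnion.1 (ht (mem_univ x)) with ⟨i, hi⟩
      exact mem_iUnion.2 ⟨i, hc3 i hi⟩
    calc Vdelta (fun a b : ↥A => edist a b) (L.restrict A).causal (L.restrict A).tau ω N δ univ
        ≤ ∑' n, optWeight (L.restrict A).tau ω N (c n) :=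
          iInf_le_of_le c <| iInf_le_of_le hc1 <| iInf_le_of_le hc2 <| iInf_le _ hcover
      _ ≤ ∑' n, (F n + e n) := ENNReal.tsum_le_tsum hc4
      _ = (∑' n, F n) + ∑' n, e n := ENNReal.tsum_add
      _ ≤ (∑' n, F n) + ε := add_le_add le_rfl hesum.le
  -- Part C : `μ (D n) ≤ V(A)`
  have hC : ∀ n, μ (D n) ≤ Vmeas (fun a b : X => edist a b) L.causal L.tau ω N A := by
    intro n
    have happly : μ (D n)
        = ⨆ (r' : ℝ≥0∞) (_ : 0 < r'), OuterMeasure.mkMetric'.pre (mAux L A ω N) r' (D n) := by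
      simp only [hμdef, OuterMeasure.mkMetric', OuterMeasure.iSup_apply]
    rw [happly]
    refine iSup₂_le fun r hr => ?_
    set g : ℝ≥0∞ := ((n + 1 : ℕ) : ℝ≥0∞)⁻¹ with hg
    have hg0 : 0 < g := ENNReal.inv_pos.2 (ENNReal.natCast_ne_top _)
    have hδ0 : 0 < min r g := lt_min hr hg0
    rw [Vmeas]
    refine le_trans ?_ (le_iSup₂ (f := fun δ (_ : (0 : ℝ≥0∞) < δ) =>
      Vdelta (fun a b : X => edist a b) L.causal L.tau ω N δ A) (min r g) hδ0)
    rw [Vdelta]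
    refine le_iInf fun c => le_iInf fun hcau => le_iInf fun hdiam => le_iInf fun hcov => ?_
    set t : ℕ → Set ↥A := fun i => {z : ↥A | (z : X) ∈ optDiamond L.causal (c i) ∧
      ∃ w : ↥A, w ∈ D n ∧ (w : X) ∈ optDiamond L.causal (c i)} with htdef
    have hcovt : D n ⊆ ⋃ i, t i := by
      intro x hx
      rcases mem_iUnion.1 (hcov x.2) with ⟨i, hi⟩
      exact mem_iUnion.2 ⟨i, hi, x, hx, hi⟩
    calc OuterMeasure.mkMetric'.pre (mAux L A ω N) r (D n)
        ≤ ∑' i, ⨆ _ : (t i).Nonempty,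
            MeasureTheory.extend (fun s (_ : EMetric.diam s ≤ r) => mAux L A ω N s) (t i) := by
          rw [OuterMeasure.mkMetric'.pre, OuterMeasure.boundedBy_apply]
          exact iInf₂_le t hcovt
      _ ≤ ∑' i, optWeight L.tau ω N (c i) := by
          refine ENNReal.tsum_le_tsum fun i => iSup_le fun hne => ?_
          obtain ⟨z, hzJ, w, hwD, hwJ⟩ := hne
          cases hci : c i with
          | none => rw [hci] at hzJ; simp [optDiamond] at hzJ
          | some ab =>
            rw [hci] at hzJ hwJ
            have hcab : L.causal ab.1 ab.2 := hcau i ab (by rw [hci]; rfl)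
            have hJd := hdiam i
            rw [hci] at hJd
            have hJdiam : EMetric.diam (cdiam L.causal ab.1 ab.2) < min r g := by
              simpa [optDiamond, ediamWith_edist_eq] using hJd
            have hJA : cdiam L.causal ab.1 ab.2 ⊆ A := by
              intro y hy
              by_contra hyA
              have h1 : EMetric.infEdist (w : X) Aᶜ ≤ edist (w : X) y :=
                EMetric.infEdist_le_edist_of_mem hyA
              have h2 : edist (w : X) y ≤ EMetric.diam (cdiam L.causal ab.1 ab.2) :=
                EMetric.edist_le_diam_of_mem hwJ hy
              have h3 : EMetric.diam (cdiam L.causal ab.1 ab.2) < g :=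
                lt_of_lt_of_le hJdiam (min_le_right _ _)
              exact absurd (lt_of_le_of_lt (le_trans hwD (le_trans h1 h2)) h3) (lt_irrefl _)
            have ha1 : (ab.1 : X) ∈ A := hJA ⟨L.causal_refl _, hcab⟩
            have ha2 : (ab.2 : X) ∈ A := hJA ⟨hcab, L.causal_refl _⟩
            have hteq : t i = cdiam (L.restrict A).causal ⟨ab.1, ha1⟩ ⟨ab.2, ha2⟩ := by
              ext z'
              simp only [htdef, mem_setOf_eq, hci]
              constructor
              · rintro ⟨hz', -⟩; exact hz'
              · intro h; exact ⟨h, w, hwD, hwJ⟩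
            have hdr : EMetric.diam (t i) ≤ r := by
              refine EMetric.diam_le fun x hx y hy => ?_
              rw [htdef, mem_setOf_eq, hci] at hx hy
              calc edist x y = edist (x : X) (y : X) := rfl
                _ ≤ EMetric.diam (cdiam L.causal ab.1 ab.2) :=
                    EMetric.edist_le_diam_of_mem hx.1 hy.1
                _ ≤ r := le_trans hJdiam.le (min_le_left _ _)
            rw [MeasureTheory.extend_eq (fun s (_ : EMetric.diam s ≤ r) => mAux L A ω N s) hdr]
            exact le_trans (mAux_le hcab hteq) le_rfl
    -- done with the two inequalities; conclude via the chosen δ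
  -- Part A : conclusion via the Carathéodory construction
  have hbor : (inferInstance : MeasurableSpace ↥A) ≤ μ.caratheodory := by
    rw [BorelSpace.measurable_eq (α := ↥A)]
    exact (OuterMeasure.mkMetric'_isMetric _).borel_le_caratheodory
  set ν : Measure ↥A := μ.toMeasure hbor with hν
  have hνeq : ∀ s : Set ↥A, MeasurableSet s → ν s = μ s :=
    fun s hs => toMeasure_apply _ _ hs
  have hμuniv : μ univ = ⨆ n, μ (D n) := by
    have h1 : ν (⋃ n, D n) = ⨆ n, ν (D n) := hDmono.directed_le.measure_iUnion
    calc μ univ = ν univ := (hνeq _ MeasurableSet.univ).symm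
      _ = ⨆ n, ν (D n) := by rw [← hDunion]; exact h1
      _ = ⨆ n, μ (D n) := iSup_congr fun n => hνeq _ (hDclosed n).measurableSet
  refine le_trans hB ?_
  rw [hμuniv]
  exact iSup_le hC
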